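/- arXiv:2406.19532 — 4 statements merged into one kernel-verified Lean document; each statement's English description precedes it below -/
import Mathlib

section
/- Let G=(V,E) be a finite simple graph, S a maximum independent set of G of size k, and x^S ∈ {0,1}^n the indicator vector of S. Define f(x) = -∑_v x_v + (γ/2) xᵀ A_G x - (1/2) xᵀ A_{G'} x on [0,1]^n. If γ ≥ k+1, then x^S is a local minimizer of f over [0,1]^n. -/
open scoped Classical
open Finset Matrix

/-- The dataless quadratic network objective
`f(x) = -∑_v x_v + (γ/2) xᵀ A_G x - (1/2) xᵀ A_{Gᶜ} x`. -/
noncomputable def quantNetObj {n : ℕ} (G : SimpleGraph (Fin n)) (γ : ℝ) (x : Fin n → ℝ) : ℝ :=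
  -(∑ v, x v) + γ / 2 * (x ⬝ᵥ ((G.adjMatrix ℝ) *ᵥ x)) - 1 / 2 * (x ⬝ᵥ ((Gᶜ.adjMatrix ℝ) *ᵥ x))

noncomputable def cmat {n : ℕ} (G : SimpleGraph (Fin n)) (γ : ℝ) (u v : Fin n) : ℝ :=
  γ / 2 * (G.adjMatrix ℝ) u v - 1 / 2 * ((Gᶜ).adjMatrix ℝ) u v

noncomputable def indic {n : ℕ} (S : Finset (Fin n)) : Fin n → ℝ :=
  fun v => if v ∈ S then (1 : ℝ) else 0

lemma quad_expand {n : ℕ} (A : Matrix (Fin n) (Fin n) ℝ) (y : Fin n → ℝ) :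
    y ⬝ᵥ (A *ᵥ y) = ∑ u, ∑ v, A u v * y u * y v := by
  simp only [dotProduct, mulVec, Finset.mul_sum]
  exact Finset.sum_congr rfl fun u _ => Finset.sum_congr rfl fun v _ => by ring

lemma fexp {n : ℕ} (G : SimpleGraph (Fin n)) (γ : ℝ) (x : Fin n → ℝ) :
    quantNetObj G γ x = -(∑ v, x v) + ∑ u, ∑ v, cmat G γ u v * x u * x v := by
  unfold quantNetObj
  rw [quad_expand, quad_expand, Finset.mul_sum, Finset.mul_sum, add_sub_assoc,
    ← Finset.sum_sub_distrib]
  congr 1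
  refine Finset.sum_congr rfl fun u _ => ?_
  rw [Finset.mul_sum, Finset.mul_sum, ← Finset.sum_sub_distrib]
  refine Finset.sum_congr rfl fun v _ => ?_
  simp only [cmat]; ring

lemma csymm {n : ℕ} (G : SimpleGraph (Fin n)) (γ : ℝ) (u v : Fin n) :
    cmat G γ u v = cmat G γ v u := by
  simp only [cmat, SimpleGraph.adjMatrix_apply]
  rw [if_congr (G.adj_comm u v) rfl rfl, if_congr ((Gᶜ).adj_comm u v) rfl rfl]

lemma key {n : ℕ} (G : SimpleGraph (Fin n)) (γ : ℝ) (S : Finset (Fin n)) (x : Fin n → ℝ) :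
    quantNetObj G γ x - quantNetObj G γ (indic S) =
      (∑ v, (-1 + ∑ u, 2 * cmat G γ u v * indic S u) * (x v - indic S v))
      + ∑ u, ∑ v, cmat G γ u v * (x u - indic S u) * (x v - indic S v) := by
  rw [fexp, fexp]
  have E1 : ∑ u, ∑ v, cmat G γ u v * x u * x v
      = ((∑ u, ∑ v, cmat G γ u v * indic S u * indic S v)
        + ∑ u, ∑ v, cmat G γ u v * indic S u * (x v - indic S v))
        + ((∑ u, ∑ v, cmat G γ u v * (x u - indic S u) * indic S v)
        + ∑ u, ∑ v, cmat G γ u v * (x u - indic S u) * (x v - indic S v)) := by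
    rw [← Finset.sum_add_distrib, ← Finset.sum_add_distrib, ← Finset.sum_add_distrib]
    refine Finset.sum_congr rfl fun u _ => ?_
    rw [← Finset.sum_add_distrib, ← Finset.sum_add_distrib, ← Finset.sum_add_distrib]
    exact Finset.sum_congr rfl fun v _ => by ring
  have E2 : ∑ u, ∑ v, cmat G γ u v * (x u - indic S u) * indic S v
      = ∑ u, ∑ v, cmat G γ u v * indic S u * (x v - indic S v) := by
    rw [Finset.sum_comm]
    exact Finset.sum_congr rfl fun a _ => Finset.sum_congr rfl fun b _ => by
      rw [csymm]; ring
  have E3 : ∑ v, (-1 + ∑ u, 2 * cmat G γ u v * indic S u) * (x v - indic S v)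
      = -(∑ v, (x v - indic S v))
        + 2 * ∑ u, ∑ v, cmat G γ u v * indic S u * (x v - indic S v) := by
    have : ∀ v, (-1 + ∑ u, 2 * cmat G γ u v * indic S u) * (x v - indic S v)
        = -(x v - indic S v) + ∑ u, 2 * (cmat G γ u v * indic S u * (x v - indic S v)) := by
      intro v
      rw [add_mul, neg_one_mul, Finset.sum_mul]
      congr 1
      exact Finset.sum_congr rfl fun u _ => by ring
    rw [Finset.sum_congr rfl fun v _ => this v, Finset.sum_add_distrib,
      Finset.sum_neg_distrib]
    congr 1
    rw [Finset.mul_sum, Finset.sum_comm]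
    exact Finset.sum_congr rfl fun a _ => by rw [Finset.mul_sum]
  have E4 : ∑ v, x v - ∑ v, indic S v = ∑ v, (x v - indic S v) :=
    (Finset.sum_sub_distrib _ _).symm
  linarith


lemma sum_indic {n : ℕ} (G : SimpleGraph (Fin n)) (γ : ℝ) (S : Finset (Fin n)) (v : Fin n) :
    ∑ u, 2 * cmat G γ u v * indic S u = ∑ u ∈ S, 2 * cmat G γ u v := by
  simp only [indic, mul_ite, mul_one, mul_zero]
  rw [Finset.sum_ite_mem, Finset.univ_inter]

lemma gradS {n : ℕ} (G : SimpleGraph (Fin n)) (γ : ℝ) (S : Finset (Fin n))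
    (hindep : ∀ u ∈ S, ∀ v ∈ S, ¬ G.Adj u v) {v : Fin n} (hv : v ∈ S) :
    (-1 + ∑ u, 2 * cmat G γ u v * indic S u) = -(S.card : ℝ) := by
  rw [sum_indic]
  have h2 : ∀ u ∈ S, 2 * cmat G γ u v = (if u = v then (1:ℝ) else 0) - 1 := by
    intro u hu
    by_cases h : u = v
    · subst h; simp [cmat]
    · have hadj := hindep u hu v hv
      simp only [cmat, SimpleGraph.adjMatrix_apply]
      rw [if_neg hadj, if_pos (SimpleGraph.compl_adj G u v |>.mpr ⟨h, hadj⟩), if_neg h]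
      ring
  rw [Finset.sum_congr rfl h2, Finset.sum_sub_distrib,
    Finset.sum_ite_eq' S v (fun _ => (1:ℝ)), if_pos hv, Finset.sum_const]
  simp only [nsmul_eq_mul, mul_one]
  ring

lemma gradNS {n : ℕ} (G : SimpleGraph (Fin n)) (γ : ℝ) (S : Finset (Fin n))
    {v : Fin n} (hv : v ∉ S) :
    (-1 + ∑ u, 2 * cmat G γ u v * indic S u)
      = (γ + 1) * (((S.filter (fun u => G.Adj u v)).card : ℝ)) - (S.card : ℝ) - 1 := by
  rw [sum_indic]
  have h2 : ∀ u ∈ S, 2 * cmat G γ u v = (γ + 1) * (if G.Adj u v then (1:ℝ) else 0) - 1 := by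
    intro u hu
    have hne : u ≠ v := fun h => hv (h ▸ hu)
    simp only [cmat, SimpleGraph.adjMatrix_apply]
    by_cases h : G.Adj u v
    · rw [if_pos h, if_neg (by simp [SimpleGraph.compl_adj, h])]; ring
    · rw [if_neg h, if_pos ((SimpleGraph.compl_adj G u v).mpr ⟨hne, h⟩)]; ring
  rw [Finset.sum_congr rfl h2, Finset.sum_sub_distrib, ← Finset.mul_sum,
    Finset.sum_boole, Finset.sum_const]
  simp only [nsmul_eq_mul, mul_one]
  ring

lemma cbound {n : ℕ} (G : SimpleGraph (Fin n)) {γ : ℝ} (hγ1 : 1 ≤ γ) (u v : Fin n) :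
    |cmat G γ u v| ≤ γ / 2 := by
  simp only [cmat, SimpleGraph.adjMatrix_apply]
  by_cases h : G.Adj u v
  · rw [if_pos h, if_neg (by simp [SimpleGraph.compl_adj, h])]
    rw [abs_le]; constructor <;> [linarith; linarith]
  · rw [if_neg h]
    by_cases h2 : (Gᶜ).Adj u v
    · rw [if_pos h2, abs_le]; constructor <;> [linarith; linarith]
    · rw [if_neg h2, abs_le]; constructor <;> [linarith; linarith]

/-- if S is a maximum independent set of size k and γ ≥ k+1, then the
indicator vector of S is a local minimizer of f over the box [0,1]^n. -/
theorem stmt1 {n k : ℕ} (G : SimpleGraph (Fin n)) (S : Finset (Fin n))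
    (hindep : ∀ u ∈ S, ∀ v ∈ S, ¬ G.Adj u v)
    (hcard : S.card = k)
    (hmax : ∀ T : Finset (Fin n), (∀ u ∈ T, ∀ v ∈ T, ¬ G.Adj u v) → T.card ≤ k)
    (γ : ℝ) (hγ : (k : ℝ) + 1 ≤ γ) :
    IsLocalMinOn (quantNetObj G γ) (Set.Icc (0 : Fin n → ℝ) 1)
      (fun v => if v ∈ S then (1 : ℝ) else 0) := by

  subst hcard
  show ∀ᶠ x in nhdsWithin (indic S) (Set.Icc (0 : Fin n → ℝ) 1),
    quantNetObj G γ (indic S) ≤ quantNetObj G γ x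
  rcases Nat.eq_zero_or_pos n with hn | hn
  · subst hn
    exact Filter.Eventually.of_forall fun x =>
      le_of_eq (congrArg _ (Subsingleton.elim _ _))
  · -- n ≥ 1, hence k ≥ 1
    have hk1 : 1 ≤ S.card := by
      rcases Finset.eq_empty_or_nonempty S with rfl | hS
      · exfalso
        have := hmax {⟨0, hn⟩} (by
          intro u hu w hw
          simp only [Finset.mem_singleton] at hu hw
          subst hu; subst hw; exact G.loopless.irrefl _)
        simp at this
      · exact Finset.card_pos.mpr hS
    have hk1' : (1 : ℝ) ≤ (S.card : ℝ) := by exact_mod_cast hk1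
    have hγ1 : (1 : ℝ) ≤ γ := by
      have : (0:ℝ) ≤ (S.card : ℝ) := Nat.cast_nonneg _
      linarith
    have hγ0 : (0 : ℝ) < γ := lt_of_lt_of_le one_pos hγ1
    have hn0 : (0 : ℝ) < (n : ℝ) := by exact_mod_cast hn
    set ε : ℝ := 1 / (γ * n) with hε
    have hεpos : 0 < ε := by positivity
    rw [Filter.eventually_iff, Metric.mem_nhdsWithin_iff]
    refine ⟨ε, hεpos, fun x hx => ?_⟩
    obtain ⟨hball, hicc⟩ := hx
    have hdist : dist x (indic S) < ε := by simpa [dist_comm] using hball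
    set t : ℝ := ∑ v, |x v - indic S v| with ht
    have ht0 : 0 ≤ t := Finset.sum_nonneg fun v _ => abs_nonneg _
    have hdv : ∀ v, |x v - indic S v| ≤ ε := fun v =>
      le_of_lt (lt_of_le_of_lt (by simpa [Real.dist_eq] using dist_le_pi_dist x (indic S) v) hdist)
    have htle : γ * t ≤ 1 := by
      have h1 : t ≤ n * ε := by
        calc t ≤ ∑ _v : Fin n, ε := Finset.sum_le_sum fun v _ => hdv v
        _ = n * ε := by simp [Finset.sum_const, Finset.card_univ, nsmul_eq_mul]
      have h2 : γ * (n * ε) = 1 := by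
        rw [hε]; field_simp
      nlinarith
    have hgrad : t ≤ ∑ v, (-1 + ∑ u, 2 * cmat G γ u v * indic S u) * (x v - indic S v) := by
      apply Finset.sum_le_sum
      intro v _
      by_cases hv : v ∈ S
      · rw [gradS G γ S hindep hv]
        have h1 : x v ≤ 1 := hicc.2 v
        have h1' : indic S v = 1 := by simp [indic, hv]
        rw [h1', abs_of_nonpos (by linarith)]
        nlinarith
      · have h0 : indic S v = 0 := by simp [indic, hv]
        have h2 : 0 ≤ x v := hicc.1 v
        rw [h0, sub_zero, abs_of_nonneg h2, gradNS G γ S hv]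
        have he1 : 1 ≤ (S.filter (fun u => G.Adj u v)).card := by
          rw [Nat.one_le_iff_ne_zero]
          intro h0c
          have hemp : S.filter (fun u => G.Adj u v) = ∅ := Finset.card_eq_zero.mp h0c
          have hnoadj : ∀ u ∈ S, ¬ G.Adj u v := by
            intro u hu ha
            have : u ∈ S.filter (fun u => G.Adj u v) := Finset.mem_filter.mpr ⟨hu, ha⟩
            simp [hemp] at this
          have hT : ∀ a ∈ insert v S, ∀ b ∈ insert v S, ¬ G.Adj a b := by
            intro a ha b hb
            rcases Finset.mem_insert.mp ha with ha' | ha' <;>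
              rcases Finset.mem_insert.mp hb with hb' | hb'
            · intro h; rw [ha', hb'] at h; exact G.loopless.irrefl v h
            · intro h; rw [ha'] at h; exact hnoadj b hb' h.symm
            · intro h; rw [hb'] at h; exact hnoadj a ha' h
            · exact hindep a ha' b hb'
          have := hmax _ hT
          rw [Finset.card_insert_of_notMem hv] at this
          omega
        have he1' : (1 : ℝ) ≤ ((S.filter (fun u => G.Adj u v)).card : ℝ) := by
          exact_mod_cast he1
        have hg1 : 1 ≤ (γ + 1) * (((S.filter (fun u => G.Adj u v)).card : ℝ))
            - (S.card : ℝ) - 1 := by nlinarith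
        nlinarith
    have hquad : -(γ / 2 * t * t)
        ≤ ∑ u, ∑ v, cmat G γ u v * (x u - indic S u) * (x v - indic S v) := by
      have habs : |∑ u, ∑ v, cmat G γ u v * (x u - indic S u) * (x v - indic S v)|
          ≤ γ / 2 * t * t := by
        calc |∑ u, ∑ v, cmat G γ u v * (x u - indic S u) * (x v - indic S v)|
            ≤ ∑ u, |∑ v, cmat G γ u v * (x u - indic S u) * (x v - indic S v)| :=
              Finset.abs_sum_le_sum_abs _ _
          _ ≤ ∑ u, ∑ v, |cmat G γ u v * (x u - indic S u) * (x v - indic S v)| :=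
              Finset.sum_le_sum fun u _ => Finset.abs_sum_le_sum_abs _ _
          _ ≤ ∑ u, ∑ v, γ / 2 * |x u - indic S u| * |x v - indic S v| := by
              refine Finset.sum_le_sum fun u _ => Finset.sum_le_sum fun v _ => ?_
              rw [abs_mul, abs_mul]
              have h1 := cbound G hγ1 u v
              have h2 : (0:ℝ) ≤ |x u - indic S u| := abs_nonneg _
              have h3 : (0:ℝ) ≤ |x v - indic S v| := abs_nonneg _
              exact mul_le_mul_of_nonneg_right (mul_le_mul_of_nonneg_right h1 h2) h3
          _ = γ / 2 * t * t := by
              have h4 : ∀ u, ∑ v, γ / 2 * |x u - indic S u| * |x v - indic S v|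
                  = γ / 2 * |x u - indic S u| * t := fun u => by
                rw [ht, ← Finset.mul_sum]
              rw [Finset.sum_congr rfl fun u _ => h4 u, ← Finset.sum_mul, ht,
                ← Finset.mul_sum]
      have := abs_le.mp habs
      linarith [this.1]
    have hkey := key G γ S x
    have h5 : 0 ≤ t * (1 - γ * t) := mul_nonneg ht0 (by linarith)
    have h6 : 0 ≤ γ * t * t := mul_nonneg (mul_nonneg (le_of_lt hγ0) ht0) ht0
    have h7 : 0 ≤ t - γ / 2 * t * t := by nlinarith [h5, h6]
    show quantNetObj G γ (indic S) ≤ quantNetObj G γ x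
    linarith [hkey, hgrad, hquad, h7]
end

section
/- Let G=(V,E) be a finite simple graph on n vertices with E nonempty, and define f(x) = -∑_v x_v + (γ/2) xᵀ A_G x - (1/2) xᵀ A_{G'} x on [0,1]^n where γ ≥ n. Then every local minimizer of f over [0,1]^n is a binary vector, i.e., lies in {0,1}^n. -/
open scoped Classical
open Finset Matrix

lemma dot_single_right' {n : ℕ} (A : Matrix (Fin n) (Fin n) ℝ) (hA : Aᵀ = A)
    (x : Fin n → ℝ) (u : Fin n) (c : ℝ) :
    x ⬝ᵥ (A *ᵥ Pi.single u c) = c * (A *ᵥ x) u := by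
  rw [Matrix.dotProduct_mulVec, dotProduct_single, ← Matrix.mulVec_transpose, hA]
  ring

lemma dot_col' {n : ℕ} (A : Matrix (Fin n) (Fin n) ℝ) (hA : Aᵀ = A)
    (x : Fin n → ℝ) (w : Fin n) : (x ⬝ᵥ fun i => A i w) = (A *ᵥ x) w := by
  have hs : ∀ i, A i w = A w i := fun i => by simpa using congrFun (congrFun hA w) i
  simp only [dotProduct, Matrix.mulVec]
  exact Finset.sum_congr rfl fun i _ => by beta_reduce; rw [hs]; ring

lemma quad_expand' {n : ℕ} (A : Matrix (Fin n) (Fin n) ℝ) (hA : Aᵀ = A)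
    (hvv : ∀ w, A w w = 0)
    (x : Fin n → ℝ) (v u : Fin n) (a b : ℝ) :
    (x + a • (Pi.single v 1 : Fin n → ℝ) + b • (Pi.single u 1 : Fin n → ℝ)) ⬝ᵥ
      (A *ᵥ (x + a • (Pi.single v 1 : Fin n → ℝ) + b • (Pi.single u 1 : Fin n → ℝ)))
    = x ⬝ᵥ (A *ᵥ x) + 2*a*(A *ᵥ x) v + 2*b*(A *ᵥ x) u + 2*a*b*(A v u) := by
  have hAuv : A u v = A v u := by simpa using congrFun (congrFun hA v) u
  have hcol : ∀ (x : Fin n → ℝ) w, x ⬝ᵥ A.col w = (A *ᵥ x) w := fun x w => dot_col' A hA x w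
  simp only [Matrix.mulVec_add, Matrix.mulVec_smul, dotProduct_add,
    add_dotProduct, dotProduct_smul, smul_dotProduct,
    smul_eq_mul, dot_single_right' A hA,
    single_dotProduct, Pi.add_apply, Pi.smul_apply, Matrix.mulVec_single_one,
    hcol, Matrix.col_apply, one_mul, mul_one]
  rw [hvv, hvv, hAuv]
  ring

lemma obj_update' {n : ℕ} (G : SimpleGraph (Fin n)) (γ : ℝ) (x : Fin n → ℝ)
    (v u : Fin n) (a b : ℝ) :
    quantNetObj G γ (x + a • (Pi.single v 1 : Fin n → ℝ) + b • (Pi.single u 1 : Fin n → ℝ))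
    = quantNetObj G γ x
      + a * (-1 + γ * ((G.adjMatrix ℝ) *ᵥ x) v - ((Gᶜ.adjMatrix ℝ) *ᵥ x) v)
      + b * (-1 + γ * ((G.adjMatrix ℝ) *ᵥ x) u - ((Gᶜ.adjMatrix ℝ) *ᵥ x) u)
      + a * b * (γ * (G.adjMatrix ℝ) v u - (Gᶜ.adjMatrix ℝ) v u) := by
  have hAs : (G.adjMatrix ℝ)ᵀ = G.adjMatrix ℝ := G.transpose_adjMatrix
  have hBs : ((Gᶜ).adjMatrix ℝ)ᵀ = (Gᶜ).adjMatrix ℝ := (Gᶜ).transpose_adjMatrix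
  have hAd : ∀ w, (G.adjMatrix ℝ) w w = 0 := fun w => by simp
  have hBd : ∀ w, ((Gᶜ).adjMatrix ℝ) w w = 0 := fun w => by simp
  have hsum : ∑ w, (x + a • (Pi.single v 1 : Fin n → ℝ) + b • (Pi.single u 1 : Fin n → ℝ)) w
      = (∑ w, x w) + a + b := by
    simp [Finset.sum_add_distrib, ← Finset.mul_sum, Finset.sum_pi_single']
  unfold quantNetObj
  rw [quad_expand' _ hAs hAd, quad_expand' _ hBs hBd, hsum]
  ring

/-- for γ ≥ n (and G having at least one edge), every local minimizer of f
over the box [0,1]^n is a binary vector. -/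
theorem stmt3 {n : ℕ} (G : SimpleGraph (Fin n)) (hE : G.edgeSet.Nonempty)
    (γ : ℝ) (hγ : (n : ℝ) ≤ γ) (x : Fin n → ℝ)
    (hx : x ∈ Set.Icc (0 : Fin n → ℝ) 1)
    (hmin : IsLocalMinOn (quantNetObj G γ) (Set.Icc (0 : Fin n → ℝ) 1) x) :
    ∀ v, x v = 0 ∨ x v = 1 := by
  classical
  set A : Matrix (Fin n) (Fin n) ℝ := G.adjMatrix ℝ with hAdef
  set B : Matrix (Fin n) (Fin n) ℝ := (Gᶜ).adjMatrix ℝ with hBdef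
  set c : Fin n → ℝ := fun w => -1 + γ * (A *ᵥ x) w - (B *ᵥ x) w with hcdef
  have hx0 : ∀ w, 0 ≤ x w := fun w => hx.1 w
  have hx1 : ∀ w, x w ≤ 1 := fun w => hx.2 w
  -- n ≥ 2
  obtain ⟨p, q, hpq⟩ : ∃ p q, G.Adj p q := by
    obtain ⟨e, he⟩ := hE
    induction e using Sym2.ind with
    | _ p q => exact ⟨p, q, he⟩
  have hnontriv : Nontrivial (Fin n) := ⟨⟨p, q, hpq.ne⟩⟩
  have hn2 : 2 ≤ n := by
    have := Fintype.one_lt_card_iff_nontrivial.mpr hnontriv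
    simp at this; omega
  have hγ0 : (0:ℝ) < γ := by
    have : (0:ℝ) < (n:ℝ) := by exact_mod_cast Nat.lt_of_lt_of_le (by norm_num) hn2
    linarith
  -- entries nonneg
  have hAnn : ∀ v w, 0 ≤ A v w := fun v w => by
    simp only [hAdef, SimpleGraph.adjMatrix_apply]; split <;> norm_num
  have hBnn : ∀ v w, 0 ≤ B v w := fun v w => by
    simp only [hBdef, SimpleGraph.adjMatrix_apply]; split <;> norm_num
  -- local min ball
  obtain ⟨δ, hδ0, hδ⟩ := Metric.nhdsWithin_basis_ball.mem_iff.mp hmin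
  -- key perturbation inequality
  have key : ∀ (v u : Fin n), v ≠ u → ∀ a b : ℝ,
      0 ≤ x v + a → x v + a ≤ 1 → 0 ≤ x u + b → x u + b ≤ 1 → |a| < δ → |b| < δ →
      0 ≤ a * c v + b * c u + a * b * (γ * A v u - B v u) := by
    intro v u hvu a b h1 h2 h3 h4 h5 h6
    set y := x + a • (Pi.single v 1 : Fin n → ℝ) + b • (Pi.single u 1 : Fin n → ℝ) with hy
    have hyv : y v = x v + a := by simp [hy, Pi.single_apply, hvu]
    have hyu : y u = x u + b := by simp [hy, Pi.single_apply, hvu.symm]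
    have hyo : ∀ w, w ≠ v → w ≠ u → y w = x w := fun w hw1 hw2 => by
      simp [hy, Pi.single_apply, hw1, hw2]
    have hyI : y ∈ Set.Icc (0 : Fin n → ℝ) 1 := by
      rw [Set.mem_Icc]
      constructor <;> intro w <;>
        simp only [Pi.zero_apply, Pi.one_apply] <;>
        rcases eq_or_ne w v with rfl | hwv
      · rw [hyv]; exact h1
      · rcases eq_or_ne w u with rfl | hwu
        · rw [hyu]; exact h3
        · rw [hyo w hwv hwu]; exact hx0 w
      · rw [hyv]; exact h2
      · rcases eq_or_ne w u with rfl | hwu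
        · rw [hyu]; exact h4
        · rw [hyo w hwv hwu]; exact hx1 w
    have hyb : y ∈ Metric.ball x δ := by
      rw [Metric.mem_ball]
      have hmax : 0 ≤ max |a| |b| := le_max_of_le_left (abs_nonneg a)
      have hdle : dist y x ≤ max |a| |b| := by
        rw [dist_pi_le_iff hmax]
        intro w
        rw [Real.dist_eq]
        rcases eq_or_ne w v with rfl | hwv
        · rw [hyv]; simpa using le_max_left |a| |b|
        · rcases eq_or_ne w u with rfl | hwu
          · rw [hyu]; simpa using le_max_right |a| |b|
          · rw [hyo w hwv hwu]; simpa using hmax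
      exact lt_of_le_of_lt hdle (max_lt h5 h6)
    have hle : quantNetObj G γ x ≤ quantNetObj G γ y := hδ ⟨hyb, hyI⟩
    rw [hy, obj_update' G γ x v u a b] at hle
    simp only [hcdef]
    linarith
  -- interior coordinates have zero slope
  have slope_zero : ∀ w, 0 < x w → x w < 1 → c w = 0 := by
    intro w hw0 hw1
    obtain ⟨z, hz⟩ := exists_ne w
    set ε := min (min (x w) (1 - x w)) (δ/2) with hε
    have hε0 : 0 < ε := by
      apply lt_min (lt_min hw0 (by linarith)) (by linarith)
    have hεx : ε ≤ x w := le_trans (min_le_left _ _) (min_le_left _ _)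
    have hεx1 : ε ≤ 1 - x w := le_trans (min_le_left _ _) (min_le_right _ _)
    have hεδ : ε < δ := lt_of_le_of_lt (min_le_right _ _) (by linarith)
    have habs : |ε| < δ := by rwa [abs_of_pos hε0]
    have hnabs : |(-ε)| < δ := by rwa [abs_neg, abs_of_pos hε0]
    have h0 : |(0:ℝ)| < δ := by simpa using hδ0
    have k1 := key w z hz.symm ε 0 (by linarith) (by linarith) (by simpa using hx0 z)
      (by simpa using hx1 z) habs h0
    have k2 := key w z hz.symm (-ε) 0 (by linarith) (by linarith) (by simpa using hx0 z)
      (by simpa using hx1 z) hnabs h0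
    simp only [zero_mul, mul_zero, add_zero] at k1 k2
    nlinarith
  intro v
  by_contra hcon
  push_neg at hcon
  have hv0 : 0 < x v := lt_of_le_of_ne (hx0 v) (Ne.symm hcon.1)
  have hv1 : x v < 1 := lt_of_le_of_ne (hx1 v) hcon.2
  have hcv : c v = 0 := slope_zero v hv0 hv1
  set s := (A *ᵥ x) v with hs
  set t := (B *ᵥ x) v with ht
  have hteq : γ * s = 1 + t := by
    have : -1 + γ * s - t = 0 := hcv
    linarith
  have hmvA : (A *ᵥ x) v = ∑ w, A v w * x w := rfl
  have hmvB : (B *ᵥ x) v = ∑ w, B v w * x w := rfl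
  have ht0 : 0 ≤ t := by
    rw [ht, hmvB]
    exact Finset.sum_nonneg fun w _ => mul_nonneg (hBnn v w) (hx0 w)
  have hs0 : 0 < s := by nlinarith
  -- a positive neighbor
  obtain ⟨u, huv, hu0⟩ : ∃ u, G.Adj v u ∧ 0 < x u := by
    by_contra hc
    push_neg at hc
    have : s ≤ 0 := by
      rw [hs, hmvA]
      apply Finset.sum_nonpos
      intro w _
      by_cases hadj : G.Adj v w
      · have hw0 : x w = 0 := le_antisymm (hc w hadj) (hx0 w)
        simp [hw0]
      · simp [hAdef, SimpleGraph.adjMatrix_apply, hadj]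
    linarith
  -- the neighbor is not 1
  have hstn : s + t ≤ (n:ℝ) - 1 := by
    have hterm : ∀ w, A v w * x w + B v w * x w = x w - (if w = v then x w else 0) := by
      intro w
      rcases eq_or_ne w v with rfl | hwv
      · simp [hAdef, hBdef]
      · have h1 : A v w + B v w = 1 := by
          simp only [hAdef, hBdef, SimpleGraph.adjMatrix_apply]
          by_cases hadj : G.Adj v w
          · simp [hadj]
          · simp [hadj, SimpleGraph.compl_adj, Ne.symm hwv]
        rw [if_neg hwv, ← add_mul, h1, one_mul, sub_zero]
    have hsum : s + t = (∑ w, x w) - x v := by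
      rw [hs, ht, hmvA, hmvB, ← Finset.sum_add_distrib,
        Finset.sum_congr rfl fun w _ => hterm w, Finset.sum_sub_distrib]
      simp
    have hsum2 : s + t = ∑ w ∈ Finset.univ.erase v, x w := by
      rw [hsum, Finset.sum_erase_eq_sub (Finset.mem_univ v)]
    have hb : ∑ w ∈ Finset.univ.erase v, x w ≤ (((Finset.univ.erase v).card : ℕ) : ℝ) := by
      calc ∑ w ∈ Finset.univ.erase v, x w ≤ ∑ _w ∈ Finset.univ.erase v, (1:ℝ) :=
            Finset.sum_le_sum fun w _ => hx1 w
      _ = (((Finset.univ.erase v).card : ℕ) : ℝ) := by simp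
    have hcard : ((Finset.univ.erase v).card : ℕ) = n - 1 := by
      rw [Finset.card_erase_of_mem (Finset.mem_univ v), Finset.card_univ, Fintype.card_fin]
    have hcast : (((n - 1 : ℕ)) : ℝ) = (n : ℝ) - 1 := by
      rw [Nat.cast_sub (by omega)]; norm_num
    rw [hsum2]
    rw [hcard, hcast] at hb
    exact hb
  have hu1 : x u < 1 := by
    rcases lt_or_ge (x u) 1 with h | h
    · exact h
    have hxu1 : x u = 1 := le_antisymm (hx1 u) h
    have hs1 : (1:ℝ) ≤ s := by
      rw [hs]
      calc (1:ℝ) = A v u * x u := by simp [hAdef, huv, hxu1]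
      _ ≤ ∑ w, A v w * x w :=
          Finset.single_le_sum (f := fun w => A v w * x w)
            (fun w _ => mul_nonneg (hAnn v w) (hx0 w)) (Finset.mem_univ u)
    nlinarith
  have hcu : c u = 0 := slope_zero u hu0 hu1
  -- final contradiction
  set ε := min (min (1 - x v) (x u)) (δ/2) with hε
  have hε0 : 0 < ε := lt_min (lt_min (by linarith) hu0) (by linarith)
  have hεδ : ε < δ := lt_of_le_of_lt (min_le_right _ _) (by linarith)
  have habs : |ε| < δ := by rwa [abs_of_pos hε0]
  have hnabs : |(-ε)| < δ := by rwa [abs_neg, abs_of_pos hε0]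
  have hε1 : ε ≤ 1 - x v := le_trans (min_le_left _ _) (min_le_left _ _)
  have hε2 : ε ≤ x u := le_trans (min_le_left _ _) (min_le_right _ _)
  have k := key v u huv.ne ε (-ε) (by linarith) (by linarith) (by linarith) (by linarith)
    habs hnabs
  have hA1 : A v u = 1 := by simp [hAdef, huv]
  have hB0 : B v u = 0 := by
    simp [hBdef, SimpleGraph.adjMatrix_apply, SimpleGraph.compl_adj, huv]
  rw [hcv, hcu, hA1, hB0] at k
  nlinarith [mul_pos (mul_pos hε0 hε0) hγ0]
end

section
/- Let G=(V,E) be a finite simple graph with degree function d(v). Then the independence number α(G) satisfies α(G) ≥ ∑_{v∈V} 1/(1 + d(v)) (the Caro–Wei bound). -/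
open scoped Classical
open Finset Matrix

/-- The independence number of `G`: the maximum cardinality of an independent set. -/
noncomputable def indepNum {n : ℕ} (G : SimpleGraph (Fin n)) : ℕ :=
  (Finset.univ.powerset.filter (fun S : Finset (Fin n) => ∀ u ∈ S, ∀ v ∈ S, ¬ G.Adj u v)).sup
    Finset.card

lemma caro_wei_aux {n : ℕ} (G : SimpleGraph (Fin n)) :
    ∀ k (S : Finset (Fin n)), S.card = k →
    ∃ T, T ⊆ S ∧ (∀ u ∈ T, ∀ v ∈ T, ¬ G.Adj u v) ∧
      (∑ u ∈ S, (1:ℝ) / (1 + ((S.filter (G.Adj u)).card : ℝ))) ≤ T.card := by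
  intro k
  induction k using Nat.strong_induction_on with
  | _ k ih =>
    intro S hS
    rcases S.eq_empty_or_nonempty with rfl | hne
    · exact ⟨∅, Finset.Subset.refl _, by simp, by simp⟩
    obtain ⟨v, hv, hmin⟩ := S.exists_min_image (fun u => (S.filter (G.Adj u)).card) hne
    set N : Finset (Fin n) := insert v (S.filter (G.Adj v)) with hN
    have hNS : N ⊆ S := by
      intro u hu
      rcases Finset.mem_insert.mp hu with rfl | hu
      · exact hv
      · exact (Finset.mem_filter.mp hu).1
    set S' := S \ N with hS'
    have hvN : v ∈ N := Finset.mem_insert_self _ _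
    have hvS' : v ∉ S' := by simp [hS', hvN]
    have hsub : S' ⊆ S := Finset.sdiff_subset
    have hcard' : S'.card < k := by
      have h := Finset.card_lt_card ((Finset.ssubset_iff_of_subset hsub).mpr ⟨v, hv, hvS'⟩)
      omega
    obtain ⟨T', hT'S, hT'ind, hT'sum⟩ := ih S'.card hcard' S' rfl
    have hvT' : v ∉ T' := fun h => hvS' (hT'S h)
    have hnoadj : ∀ u ∈ T', ¬ G.Adj v u := by
      intro u hu hadj
      have huS' : u ∈ S' := hT'S hu
      have : u ∉ N := (Finset.mem_sdiff.mp huS').2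
      exact this (Finset.mem_insert_of_mem (Finset.mem_filter.mpr ⟨hsub huS', hadj⟩))
    refine ⟨insert v T', ?_, ?_, ?_⟩
    · intro u hu
      rcases Finset.mem_insert.mp hu with rfl | hu
      · exact hv
      · exact hsub (hT'S hu)
    · intro u hu w hw h
      rcases Finset.mem_insert.mp hu with hu | hu
      · rcases Finset.mem_insert.mp hw with hw | hw
        · exact G.loopless.irrefl v (by rw [hu, hw] at h; exact h)
        · exact hnoadj w hw (by rw [hu] at h; exact h)
      · rcases Finset.mem_insert.mp hw with hw | hw
        · exact hnoadj u hu (by rw [hw] at h; exact h.symm)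
        · exact hT'ind u hu w hw h
    · have hNcard : (N.card : ℝ) = 1 + ((S.filter (G.Adj v)).card : ℝ) := by
        have : v ∉ S.filter (G.Adj v) := by simp [G.loopless.irrefl v]
        rw [hN, Finset.card_insert_of_notMem this]
        push_cast; ring
      have hsplit : (∑ u ∈ S, (1:ℝ) / (1 + ((S.filter (G.Adj u)).card : ℝ)))
          = (∑ u ∈ S', (1:ℝ) / (1 + ((S.filter (G.Adj u)).card : ℝ)))
            + ∑ u ∈ N, (1:ℝ) / (1 + ((S.filter (G.Adj u)).card : ℝ)) := by
        rw [hS', Finset.sum_sdiff hNS]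
      have hNle : (∑ u ∈ N, (1:ℝ) / (1 + ((S.filter (G.Adj u)).card : ℝ))) ≤ 1 := by
        have h1 : ∀ u ∈ N, (1:ℝ) / (1 + ((S.filter (G.Adj u)).card : ℝ))
            ≤ 1 / (1 + ((S.filter (G.Adj v)).card : ℝ)) := by
          intro u hu
          apply one_div_le_one_div_of_le
          · positivity
          · have := hmin u (hNS hu)
            linarith [(Nat.cast_le.mpr this : ((S.filter (G.Adj v)).card : ℝ) ≤ (S.filter (G.Adj u)).card)]
        calc (∑ u ∈ N, (1:ℝ) / (1 + ((S.filter (G.Adj u)).card : ℝ)))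
            ≤ ∑ _u ∈ N, (1:ℝ) / (1 + ((S.filter (G.Adj v)).card : ℝ)) :=
              Finset.sum_le_sum h1
          _ = N.card * (1 / (1 + ((S.filter (G.Adj v)).card : ℝ))) := by
              rw [Finset.sum_const, nsmul_eq_mul]
          _ = 1 := by
              rw [hNcard]
              field_simp
      have hS'le : (∑ u ∈ S', (1:ℝ) / (1 + ((S.filter (G.Adj u)).card : ℝ)))
          ≤ ∑ u ∈ S', (1:ℝ) / (1 + ((S'.filter (G.Adj u)).card : ℝ)) := by
        apply Finset.sum_le_sum
        intro u _
        apply one_div_le_one_div_of_le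
        · positivity
        · have : (S'.filter (G.Adj u)).card ≤ (S.filter (G.Adj u)).card :=
            Finset.card_le_card (Finset.filter_subset_filter _ hsub)
          have := (Nat.cast_le.mpr this : ((S'.filter (G.Adj u)).card : ℝ) ≤ (S.filter (G.Adj u)).card)
          linarith
      have hcardT : ((insert v T').card : ℝ) = T'.card + 1 := by
        rw [Finset.card_insert_of_notMem hvT']; push_cast; ring
      rw [hsplit, hcardT]
      linarith

/-- Caro–Wei: α(G) ≥ ∑_{v} 1/(1 + d(v)). -/
theorem stmt10 {n : ℕ} (G : SimpleGraph (Fin n)) :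
    (∑ v, (1 : ℝ) / (1 + (G.degree v : ℝ))) ≤ (indepNum G : ℝ) := by
  obtain ⟨T, hTsub, hTind, hTsum⟩ := caro_wei_aux G (Finset.univ.card) Finset.univ rfl
  have hdeg : ∀ v : Fin n, (Finset.univ.filter (G.Adj v)).card = G.degree v := by
    intro v
    rw [← SimpleGraph.neighborFinset_eq_filter]
    rfl
  have h1 : (∑ v, (1 : ℝ) / (1 + (G.degree v : ℝ))) ≤ T.card := by
    calc (∑ v, (1 : ℝ) / (1 + (G.degree v : ℝ)))
        = ∑ v, (1:ℝ) / (1 + ((Finset.univ.filter (G.Adj v)).card : ℝ)) := by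
          apply Finset.sum_congr rfl; intro v _; rw [hdeg]
      _ ≤ T.card := hTsum
  have h2 : T.card ≤ indepNum G := by
    apply Finset.le_sup (f := Finset.card)
    simp only [Finset.mem_filter, Finset.mem_powerset]
    exact ⟨hTsub, hTind⟩
  calc (∑ v, (1 : ℝ) / (1 + (G.degree v : ℝ))) ≤ (T.card : ℝ) := h1
    _ ≤ (indepNum G : ℝ) := Nat.cast_le.mpr h2
end

section
/- Let G=(V,E) be a finite simple graph on n vertices with E nonempty, f(x) = -∑_v x_v + (γ/2) xᵀ A_G x - (1/2) xᵀ A_{G'} x with γ ≥ n+1. Then the set of local minimizers of f over [0,1]^n is exactly the set of indicator vectors of maximal independent sets of G. -/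
open scoped Classical
open Finset Matrix

noncomputable def qGrad {n : ℕ} (G : SimpleGraph (Fin n)) (γ : ℝ) (x : Fin n → ℝ)
    (v : Fin n) : ℝ :=
  -1 + γ * ((G.adjMatrix ℝ) *ᵥ x) v - ((Gᶜ.adjMatrix ℝ) *ᵥ x) v

lemma sym_expand {n : ℕ} (M : Matrix (Fin n) (Fin n) ℝ) (hM : M.IsSymm) (x h : Fin n → ℝ) :
    (x + h) ⬝ᵥ (M *ᵥ (x + h)) = x ⬝ᵥ (M *ᵥ x) + 2 * (h ⬝ᵥ (M *ᵥ x)) + h ⬝ᵥ (M *ᵥ h) := by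
  have hxh : x ⬝ᵥ (M *ᵥ h) = h ⬝ᵥ (M *ᵥ x) := by
    rw [Matrix.dotProduct_mulVec]
    nth_rewrite 1 [← hM.eq]
    rw [Matrix.vecMul_transpose, dotProduct_comm]
  simp only [Matrix.mulVec_add, dotProduct_add, add_dotProduct, hxh]
  ring

lemma quantNetObj_expand {n : ℕ} (G : SimpleGraph (Fin n)) (γ : ℝ) (x h : Fin n → ℝ) :
    quantNetObj G γ (x + h) = quantNetObj G γ x + (∑ v, h v * qGrad G γ x v)
      + γ / 2 * (h ⬝ᵥ ((G.adjMatrix ℝ) *ᵥ h)) - 1 / 2 * (h ⬝ᵥ ((Gᶜ.adjMatrix ℝ) *ᵥ h)) := by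
  have e2 := sym_expand (G.adjMatrix ℝ) (SimpleGraph.isSymm_adjMatrix G) x h
  have e3 := sym_expand (Gᶜ.adjMatrix ℝ) (SimpleGraph.isSymm_adjMatrix Gᶜ) x h
  have e4 : ∑ v, h v * qGrad G γ x v
      = -(∑ v, h v) + γ * (h ⬝ᵥ ((G.adjMatrix ℝ) *ᵥ x)) - (h ⬝ᵥ ((Gᶜ.adjMatrix ℝ) *ᵥ x)) := by
    have e5 : ∀ v ∈ Finset.univ, h v * qGrad G γ x v
        = -(h v) + γ * (h v * ((G.adjMatrix ℝ) *ᵥ x) v) - h v * ((Gᶜ.adjMatrix ℝ) *ᵥ x) v := by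
      intro v _; simp only [qGrad]; ring
    rw [Finset.sum_congr rfl e5]
    simp only [dotProduct, Finset.sum_sub_distrib, Finset.sum_add_distrib,
      Finset.sum_neg_distrib, Finset.mul_sum]
  simp only [quantNetObj, Pi.add_apply, Finset.sum_add_distrib, e2, e3]
  rw [e4]; ring

lemma quad_abs {n : ℕ} (M : Matrix (Fin n) (Fin n) ℝ) (hM : ∀ i j, |M i j| ≤ 1)
    (h : Fin n → ℝ) (ε : ℝ) (hε : 0 ≤ ε) (hh : ∀ v, |h v| ≤ ε) :
    |h ⬝ᵥ (M *ᵥ h)| ≤ ε * n * ∑ v, |h v| := by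
  calc |h ⬝ᵥ (M *ᵥ h)| = |∑ i, h i * (M *ᵥ h) i| := rfl
    _ ≤ ∑ i, |h i * (M *ᵥ h) i| := Finset.abs_sum_le_sum_abs _ _
    _ ≤ ∑ _i : Fin n, ε * ∑ v, |h v| := by
        apply Finset.sum_le_sum
        intro i _
        rw [abs_mul]
        have h1 : |(M *ᵥ h) i| ≤ ∑ v, |h v| := by
          calc |(M *ᵥ h) i| = |∑ j, M i j * h j| := rfl
            _ ≤ ∑ j, |M i j * h j| := Finset.abs_sum_le_sum_abs _ _
            _ ≤ ∑ j, |h j| := by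
                apply Finset.sum_le_sum; intro j _
                rw [abs_mul]
                calc |M i j| * |h j| ≤ 1 * |h j| :=
                      mul_le_mul_of_nonneg_right (hM i j) (abs_nonneg _)
                  _ = |h j| := one_mul _
        exact mul_le_mul (hh i) h1 (abs_nonneg _) hε
    _ = ε * n * ∑ v, |h v| := by
        rw [Finset.sum_const, Finset.card_univ, Fintype.card_fin, nsmul_eq_mul]; ring


lemma stmt14_backward {n : ℕ} (G : SimpleGraph (Fin n)) (hn : 0 < n)
    (γ : ℝ) (hγ : (n : ℝ) + 1 ≤ γ) (S : Finset (Fin n))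
    (hind : ∀ u ∈ S, ∀ v ∈ S, ¬ G.Adj u v)
    (hmax : ∀ v, v ∉ S → ∃ w ∈ S, G.Adj v w) :
    (fun v => if v ∈ S then (1:ℝ) else 0) ∈ Set.Icc (0 : Fin n → ℝ) 1 ∧
      IsLocalMinOn (quantNetObj G γ) (Set.Icc (0 : Fin n → ℝ) 1)
        (fun v => if v ∈ S then (1:ℝ) else 0) := by
  set z : Fin n → ℝ := fun v => if v ∈ S then (1:ℝ) else 0 with hz
  have hz01 : ∀ v, 0 ≤ z v ∧ z v ≤ 1 := by intro v; simp only [hz]; split_ifs <;> norm_num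
  have hzbox : z ∈ Set.Icc (0 : Fin n → ℝ) 1 :=
    ⟨fun v => (hz01 v).1, fun v => (hz01 v).2⟩
  refine ⟨hzbox, ?_⟩
  have hn1 : (1:ℝ) ≤ n := by exact_mod_cast hn
  have hγpos : 0 < γ := by linarith
  set ε : ℝ := 2 / (n * (γ + 1)) with hε
  have hεpos : 0 < ε := by
    apply div_pos two_pos
    apply mul_pos (by linarith) (by linarith)
  have hgrad : ∀ v, (v ∈ S → qGrad G γ z v ≤ -1) ∧ (v ∉ S → 1 ≤ qGrad G γ z v) := by
    intro v
    have ha : ((G.adjMatrix ℝ) *ᵥ z) v = ∑ u ∈ G.neighborFinset v, z u :=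
      G.adjMatrix_mulVec_apply v z
    have hb : ((Gᶜ.adjMatrix ℝ) *ᵥ z) v = ∑ u ∈ Gᶜ.neighborFinset v, z u :=
      Gᶜ.adjMatrix_mulVec_apply v z
    have hbnn : 0 ≤ ∑ u ∈ Gᶜ.neighborFinset v, z u :=
      Finset.sum_nonneg fun u _ => (hz01 u).1
    constructor
    · intro hv
      have ha0 : ∑ u ∈ G.neighborFinset v, z u = 0 := by
        apply Finset.sum_eq_zero
        intro u hu
        rw [SimpleGraph.mem_neighborFinset] at hu
        have huS : u ∉ S := fun huS => hind v hv u huS hu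
        simp [hz, huS]
      simp only [qGrad, ha, hb, ha0, mul_zero]
      linarith
    · intro hv
      obtain ⟨w, hwS, hadj⟩ := hmax v hv
      have ha1 : (1:ℝ) ≤ ∑ u ∈ G.neighborFinset v, z u := by
        have hwmem : w ∈ G.neighborFinset v := by rwa [SimpleGraph.mem_neighborFinset]
        have hzw : z w = 1 := by simp [hz, hwS]
        calc (1:ℝ) = z w := hzw.symm
          _ ≤ ∑ u ∈ G.neighborFinset v, z u :=
            Finset.single_le_sum (fun u _ => (hz01 u).1) hwmem
      have hdisj : Disjoint (G.neighborFinset v) (Gᶜ.neighborFinset v) := by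
        rw [Finset.disjoint_left]
        intro u hu hu'
        rw [SimpleGraph.mem_neighborFinset] at hu hu'
        rw [SimpleGraph.compl_adj] at hu'
        exact hu'.2 hu
      have hsum : ∑ u ∈ G.neighborFinset v, z u + ∑ u ∈ Gᶜ.neighborFinset v, z u ≤ n := by
        rw [← Finset.sum_union hdisj]
        calc ∑ u ∈ G.neighborFinset v ∪ Gᶜ.neighborFinset v, z u
            ≤ ∑ u : Fin n, z u := Finset.sum_le_sum_of_subset_of_nonneg
              (Finset.subset_univ _) (fun u _ _ => (hz01 u).1)
          _ ≤ ∑ _u : Fin n, (1:ℝ) := Finset.sum_le_sum (fun u _ => (hz01 u).2)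
          _ = n := by simp
      simp only [qGrad, ha, hb]
      nlinarith [ha1, hsum, hγpos]
  have key : {y | quantNetObj G γ z ≤ quantNetObj G γ y}
      ∈ nhdsWithin z (Set.Icc (0:Fin n → ℝ) 1) := by
    rw [Metric.mem_nhdsWithin_iff]
    refine ⟨ε, hεpos, ?_⟩
    rintro y ⟨hball, hybox⟩
    simp only [Set.mem_setOf_eq]
    set h : Fin n → ℝ := y - z with hh
    have hy : y = z + h := by simp [hh]
    have habs : ∀ v, |h v| ≤ ε := by
      intro v
      have hd := (dist_pi_lt_iff hεpos).mp (Metric.mem_ball.mp hball) v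
      rw [Real.dist_eq] at hd
      exact le_of_lt (by simpa [hh] using hd)
    have hlin : ∑ v, |h v| ≤ ∑ v, h v * qGrad G γ z v := by
      apply Finset.sum_le_sum
      intro v _
      by_cases hv : v ∈ S
      · have hg := (hgrad v).1 hv
        have hhv : h v ≤ 0 := by
          have h1v : y v ≤ 1 := hybox.2 v
          simp only [hh, Pi.sub_apply, hz]
          rw [if_pos hv]; linarith
        rw [abs_of_nonpos hhv]
        nlinarith
      · have hg := (hgrad v).2 hv
        have hhv : 0 ≤ h v := by
          have h0v : 0 ≤ y v := hybox.1 v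
          simp only [hh, Pi.sub_apply, hz]
          rw [if_neg hv]; linarith
        rw [abs_of_nonneg hhv]
        nlinarith
    have hadj1 : ∀ i j, |(G.adjMatrix ℝ) i j| ≤ 1 := by
      intro i j; rw [SimpleGraph.adjMatrix_apply]; split_ifs <;> norm_num
    have hadj2 : ∀ i j, |(Gᶜ.adjMatrix ℝ) i j| ≤ 1 := by
      intro i j; rw [SimpleGraph.adjMatrix_apply]; split_ifs <;> norm_num
    have hq1 := quad_abs (G.adjMatrix ℝ) hadj1 h ε hεpos.le habs
    have hq2 := quad_abs (Gᶜ.adjMatrix ℝ) hadj2 h ε hεpos.le habs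
    have hεeq : ε * n * (γ + 1) = 2 := by
      rw [hε]; field_simp
    have hSnn : 0 ≤ ∑ v, |h v| := Finset.sum_nonneg fun v _ => abs_nonneg _
    rw [hy, quantNetObj_expand]
    have hK : γ/2 * (ε * n * ∑ v, |h v|) + 1/2 * (ε * n * ∑ v, |h v|) = ∑ v, |h v| := by
      have hr : γ/2 * (ε * n * ∑ v, |h v|) + 1/2 * (ε * n * ∑ v, |h v|)
          = (ε * n * (γ + 1)) / 2 * ∑ v, |h v| := by ring
      rw [hr, hεeq]; ring
    have hab1 := (abs_le.mp hq1).1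
    have hab2 := (abs_le.mp hq2).2
    have hG1 : -(γ/2 * (ε * n * ∑ v, |h v|)) ≤ γ/2 * (h ⬝ᵥ ((G.adjMatrix ℝ) *ᵥ h)) := by
      nlinarith
    have hG2 : -(1/2 * (ε * n * ∑ v, |h v|)) ≤ -(1/2 * (h ⬝ᵥ ((Gᶜ.adjMatrix ℝ) *ᵥ h))) := by
      nlinarith
    linarith [hlin, hG1, hG2, hK]
  exact key


lemma sum_nbr_le {n : ℕ} (G : SimpleGraph (Fin n)) (x : Fin n → ℝ) (hx1 : ∀ v, x v ≤ 1)
    (v : Fin n) (inst : Fintype (G.neighborSet v)) :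
    ∑ u ∈ @SimpleGraph.neighborFinset _ G v inst, x u ≤ (n : ℝ) - 1 := by
  have hsub : @SimpleGraph.neighborFinset _ G v inst ⊆ Finset.univ.erase v := by
    intro u hu
    rw [SimpleGraph.mem_neighborFinset] at hu
    exact Finset.mem_erase.mpr ⟨(G.ne_of_adj hu).symm, Finset.mem_univ u⟩
  have hcard := Finset.card_le_card hsub
  rw [Finset.card_erase_of_mem (Finset.mem_univ v), Finset.card_univ, Fintype.card_fin] at hcard
  have hn : 1 ≤ n := v.pos
  have hc : ((@SimpleGraph.neighborFinset _ G v inst).card : ℝ) ≤ ((n - 1 : ℕ) : ℝ) := by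
    exact_mod_cast hcard
  rw [Nat.cast_sub hn, Nat.cast_one] at hc
  calc ∑ u ∈ @SimpleGraph.neighborFinset _ G v inst, x u
      ≤ ∑ _u ∈ @SimpleGraph.neighborFinset _ G v inst, (1:ℝ) :=
        Finset.sum_le_sum fun u _ => hx1 u
    _ = ((@SimpleGraph.neighborFinset _ G v inst).card : ℝ) := by
        rw [Finset.sum_const, nsmul_eq_mul, mul_one]
    _ ≤ (n:ℝ) - 1 := hc

lemma stmt14_forward {n : ℕ} (G : SimpleGraph (Fin n)) (hn : 0 < n)
    (γ : ℝ) (hγ : (n : ℝ) + 1 ≤ γ) (x : Fin n → ℝ)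
    (hbox : x ∈ Set.Icc (0 : Fin n → ℝ) 1)
    (hloc : IsLocalMinOn (quantNetObj G γ) (Set.Icc (0 : Fin n → ℝ) 1) x) :
    ∃ S : Finset (Fin n),
      (∀ u ∈ S, ∀ v ∈ S, ¬ G.Adj u v) ∧ (∀ v, v ∉ S → ∃ w ∈ S, G.Adj v w) ∧
      x = fun v => if v ∈ S then (1 : ℝ) else 0 := by
  have hn1 : (1:ℝ) ≤ n := by exact_mod_cast hn
  have hγpos : 0 < γ := by linarith
  have hx0 : ∀ v, 0 ≤ x v := fun v => hbox.1 v
  have hx1 : ∀ v, x v ≤ 1 := fun v => hbox.2 v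
  have hev : {y | quantNetObj G γ x ≤ quantNetObj G γ y}
      ∈ nhdsWithin x (Set.Icc (0:Fin n → ℝ) 1) := hloc
  rw [Metric.mem_nhdsWithin_iff] at hev
  obtain ⟨ε, hεpos, hkey⟩ := hev
  have key : ∀ h : Fin n → ℝ, (∀ v, |h v| < ε) → x + h ∈ Set.Icc (0:Fin n → ℝ) 1 →
      0 ≤ (∑ v, h v * qGrad G γ x v)
        + γ / 2 * (h ⬝ᵥ ((G.adjMatrix ℝ) *ᵥ h)) - 1 / 2 * (h ⬝ᵥ ((Gᶜ.adjMatrix ℝ) *ᵥ h)) := by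
    intro h hsmall hmem
    have hball : x + h ∈ Metric.ball x ε := by
      rw [Metric.mem_ball, dist_pi_lt_iff hεpos]
      intro v
      rw [Real.dist_eq]
      simpa using hsmall v
    have hk := hkey (Set.mem_inter hball hmem)
    simp only [Set.mem_setOf_eq] at hk
    rw [quantNetObj_expand] at hk
    linarith
  have single : ∀ (v : Fin n) (t : ℝ), |t| < ε → 0 ≤ x v + t → x v + t ≤ 1 →
      0 ≤ t * qGrad G γ x v := by
    intro v t ht h0 h1
    have hmem : x + Pi.single v t ∈ Set.Icc (0:Fin n → ℝ) 1 := by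
      rw [Set.mem_Icc]
      constructor <;> rw [Pi.le_def] <;> intro w <;> by_cases hw : w = v
      · subst hw; simpa using h0
      · simpa [Pi.single_eq_of_ne hw] using hx0 w
      · subst hw; simpa using h1
      · simpa [Pi.single_eq_of_ne hw] using hx1 w
    have hsmall : ∀ w, |(Pi.single v t : Fin n → ℝ) w| < ε := by
      intro w; by_cases hw : w = v
      · subst hw; simpa using ht
      · simp [Pi.single_eq_of_ne hw, hεpos]
    have hk := key (Pi.single v t) hsmall hmem
    have q1 : (Pi.single v t : Fin n → ℝ) ⬝ᵥ ((G.adjMatrix ℝ) *ᵥ Pi.single v t) = 0 := by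
      rw [Matrix.mulVec_single, single_dotProduct]
      simp
    have q2 : (Pi.single v t : Fin n → ℝ) ⬝ᵥ ((Gᶜ.adjMatrix ℝ) *ᵥ Pi.single v t) = 0 := by
      rw [Matrix.mulVec_single, single_dotProduct]
      simp
    have q3 : ∑ w, (Pi.single v t : Fin n → ℝ) w * qGrad G γ x w = t * qGrad G γ x v := by
      rw [show (∑ w, (Pi.single v t : Fin n → ℝ) w * qGrad G γ x w)
          = (Pi.single v t ⬝ᵥ fun w => qGrad G γ x w) from rfl,
        single_dotProduct]
    rw [q1, q2, q3] at hk
    linarith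
  have up : ∀ v, x v < 1 → 0 ≤ qGrad G γ x v := by
    intro v hv
    set t := min (ε/2) (1 - x v) with htd
    have ht0 : 0 < t := lt_min (by linarith) (by linarith)
    have hta : |t| < ε := by
      rw [abs_of_pos ht0]
      exact lt_of_le_of_lt (min_le_left _ _) (by linarith)
    have h1 := single v t hta (by linarith [hx0 v]) (by linarith [min_le_right (ε/2) (1 - x v)])
    by_contra hneg
    push_neg at hneg
    have := mul_neg_of_pos_of_neg ht0 hneg
    linarith
  have down : ∀ v, 0 < x v → qGrad G γ x v ≤ 0 := by
    intro v hv
    set t := min (ε/2) (x v) with htd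
    have ht0 : 0 < t := lt_min (by linarith) hv
    have hta : |(-t)| < ε := by
      rw [abs_neg, abs_of_pos ht0]
      exact lt_of_le_of_lt (min_le_left _ _) (by linarith)
    have h1 := single v (-t) hta (by linarith [min_le_right (ε/2) (x v)]) (by linarith [hx1 v])
    by_contra hneg
    push_neg at hneg
    have := mul_neg_of_neg_of_pos (neg_neg_of_pos ht0) hneg
    linarith
  have pair : ∀ (u v : Fin n), u ≠ v → ∀ s t : ℝ, |s| < ε → |t| < ε →
      0 ≤ x u + s → x u + s ≤ 1 → 0 ≤ x v + t → x v + t ≤ 1 →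
      0 ≤ s * qGrad G γ x u + t * qGrad G γ x v
        + γ * (s * t * (G.adjMatrix ℝ) u v) - s * t * ((Gᶜ.adjMatrix ℝ) u v) := by
    intro u v huv s t hs ht h0u h1u h0v h1v
    set h : Fin n → ℝ := Pi.single u s + Pi.single v t with hdef
    have hhu : h u = s := by simp [hdef, Pi.single_eq_of_ne huv]
    have hhv : h v = t := by simp [hdef, Pi.single_eq_of_ne huv.symm]
    have hhw : ∀ w, w ≠ u → w ≠ v → h w = 0 := by
      intro w hwu hwv; simp [hdef, Pi.single_eq_of_ne hwu, Pi.single_eq_of_ne hwv]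
    have hmem : x + h ∈ Set.Icc (0:Fin n → ℝ) 1 := by
      rw [Set.mem_Icc]
      constructor <;> rw [Pi.le_def] <;> intro w <;> by_cases hwu : w = u
      · subst hwu; simp only [Pi.add_apply, hhu, Pi.zero_apply]; linarith
      · by_cases hwv : w = v
        · subst hwv; simp only [Pi.add_apply, hhv, Pi.zero_apply]; linarith
        · simp only [Pi.add_apply, hhw w hwu hwv, Pi.zero_apply, add_zero]; exact hx0 w
      · subst hwu; simp only [Pi.add_apply, hhu, Pi.one_apply]; linarith
      · by_cases hwv : w = v
        · subst hwv; simp only [Pi.add_apply, hhv, Pi.one_apply]; linarith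
        · simp only [Pi.add_apply, hhw w hwu hwv, Pi.one_apply, add_zero]; exact hx1 w
    have hsmall : ∀ w, |h w| < ε := by
      intro w
      by_cases hwu : w = u
      · subst hwu; rw [hhu]; exact hs
      · by_cases hwv : w = v
        · subst hwv; rw [hhv]; exact ht
        · rw [hhw w hwu hwv]; simpa using hεpos
    have hk := key h hsmall hmem
    have lin : ∑ w, h w * qGrad G γ x w = s * qGrad G γ x u + t * qGrad G γ x v := by
      rw [show (∑ w, h w * qGrad G γ x w) = (h ⬝ᵥ fun w => qGrad G γ x w) from rfl, hdef,
        add_dotProduct, single_dotProduct, single_dotProduct]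
    have quadM : ∀ (M : Matrix (Fin n) (Fin n) ℝ), M u u = 0 → M v v = 0 → M v u = M u v →
        h ⬝ᵥ (M *ᵥ h) = 2 * (s * t * M u v) := by
      intro M d1 d2 hsym
      rw [hdef, Matrix.mulVec_add, Matrix.mulVec_single, Matrix.mulVec_single,
        dotProduct_add, add_dotProduct, add_dotProduct,
        single_dotProduct, single_dotProduct,
        single_dotProduct, single_dotProduct]
      simp only [Pi.smul_apply, Matrix.col_apply, op_smul_eq_mul]
      rw [d1, d2, hsym]
      ring
    have dA : (G.adjMatrix ℝ) u u = 0 := by simp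
    have dA2 : (G.adjMatrix ℝ) v v = 0 := by simp
    have dB : (Gᶜ.adjMatrix ℝ) u u = 0 := by simp
    have dB2 : (Gᶜ.adjMatrix ℝ) v v = 0 := by simp
    have sA : (G.adjMatrix ℝ) v u = (G.adjMatrix ℝ) u v := by
      simp [SimpleGraph.adjMatrix_apply, SimpleGraph.adj_comm]
    have sB : (Gᶜ.adjMatrix ℝ) v u = (Gᶜ.adjMatrix ℝ) u v := by
      simp [SimpleGraph.adjMatrix_apply, SimpleGraph.adj_comm]
    rw [lin, quadM _ dA dA2 sA, quadM _ dB dB2 sB] at hk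
    linarith
  have hbin : ∀ v, x v = 0 ∨ x v = 1 := by
    by_contra hc
    push_neg at hc
    obtain ⟨v, hv0, hv1⟩ := hc
    have hvf0 : 0 < x v := (hx0 v).lt_of_ne (Ne.symm hv0)
    have hvf1 : x v < 1 := (hx1 v).lt_of_ne hv1
    have hgv : qGrad G γ x v = 0 := le_antisymm (down v hvf0) (up v hvf1)
    have hob : ∀ u, u ≠ v → x u = 0 ∨ x u = 1 := by
      intro u huv
      by_contra hc2
      push_neg at hc2
      have hu0 : 0 < x u := (hx0 u).lt_of_ne (Ne.symm hc2.1)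
      have hu1 : x u < 1 := (hx1 u).lt_of_ne hc2.2
      have hgu : qGrad G γ x u = 0 := le_antisymm (down u hu0) (up u hu1)
      set δ := min (ε/2) (min (min (x u) (1 - x u)) (min (x v) (1 - x v))) with hδd
      have hδ : 0 < δ := by
        apply lt_min (by linarith)
        exact lt_min (lt_min hu0 (by linarith)) (lt_min hvf0 (by linarith))
      have hδε : δ < ε := lt_of_le_of_lt (min_le_left _ _) (by linarith)
      have hδxu : δ ≤ x u :=
        le_trans (min_le_right _ _) (le_trans (min_le_left _ _) (min_le_left _ _))
      have hδxu1 : δ ≤ 1 - x u :=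
        le_trans (min_le_right _ _) (le_trans (min_le_left _ _) (min_le_right _ _))
      have hδxv : δ ≤ x v :=
        le_trans (min_le_right _ _) (le_trans (min_le_right _ _) (min_le_left _ _))
      have hδxv1 : δ ≤ 1 - x v :=
        le_trans (min_le_right _ _) (le_trans (min_le_right _ _) (min_le_right _ _))
      by_cases hadj : G.Adj u v
      · have hp := pair u v (G.ne_of_adj hadj) (-δ) δ
          (by rw [abs_neg, abs_of_pos hδ]; exact hδε) (by rw [abs_of_pos hδ]; exact hδε)
          (by linarith) (by linarith) (by linarith) (by linarith)
        have hA : (G.adjMatrix ℝ) u v = 1 := by simp [hadj]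
        have hnc : ¬ Gᶜ.Adj u v := by rw [SimpleGraph.compl_adj]; tauto
        have hA' : (Gᶜ.adjMatrix ℝ) u v = 0 := by simp [hnc]
        rw [hgu, hgv, hA, hA'] at hp
        nlinarith [hp, mul_pos (mul_pos hγpos hδ) hδ]
      · have huv' : Gᶜ.Adj u v := by rw [SimpleGraph.compl_adj]; exact ⟨huv, hadj⟩
        have hp := pair u v huv δ δ
          (by rw [abs_of_pos hδ]; exact hδε) (by rw [abs_of_pos hδ]; exact hδε)
          (by linarith) (by linarith) (by linarith) (by linarith)
        have hA : (G.adjMatrix ℝ) u v = 0 := by simp [hadj]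
        have hA' : (Gᶜ.adjMatrix ℝ) u v = 1 := by simp [huv']
        rw [hgu, hgv, hA, hA'] at hp
        nlinarith [hp, mul_pos hδ hδ]
    have ha := G.adjMatrix_mulVec_apply v x
    have hb := Gᶜ.adjMatrix_mulVec_apply v x
    have hbnn : 0 ≤ ((Gᶜ.adjMatrix ℝ) *ᵥ x) v := by
      rw [hb]; exact Finset.sum_nonneg fun u _ => hx0 u
    have hble : ((Gᶜ.adjMatrix ℝ) *ᵥ x) v ≤ (n:ℝ) - 1 := by
      rw [hb]; exact sum_nbr_le Gᶜ x hx1 v _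
    have hgv' : γ * ((G.adjMatrix ℝ) *ᵥ x) v = 1 + ((Gᶜ.adjMatrix ℝ) *ᵥ x) v := by
      have h2 := hgv
      simp only [qGrad] at h2
      linarith
    by_cases hall : ∀ u ∈ G.neighborFinset v, x u = 0
    · have ha0 : ((G.adjMatrix ℝ) *ᵥ x) v = 0 := by
        rw [ha]; exact Finset.sum_eq_zero hall
      rw [ha0, mul_zero] at hgv'
      linarith
    · push_neg at hall
      obtain ⟨u, hu, hune⟩ := hall
      rw [SimpleGraph.mem_neighborFinset] at hu
      have hu1 : x u = 1 := (hob u (G.ne_of_adj hu).symm).resolve_left hune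
      have hage : (1:ℝ) ≤ ((G.adjMatrix ℝ) *ᵥ x) v := by
        rw [ha]
        have hmem : u ∈ G.neighborFinset v := by rwa [SimpleGraph.mem_neighborFinset]
        calc (1:ℝ) = x u := hu1.symm
          _ ≤ _ := Finset.single_le_sum (fun w _ => hx0 w) hmem
      linarith [mul_le_mul_of_nonneg_left hage hγpos.le]
  classical
  refine ⟨Finset.univ.filter (fun v => x v = 1), ?_, ?_, ?_⟩
  · intro u hu w hw hadj
    rw [Finset.mem_filter] at hu hw
    have hxu : x u = 1 := hu.2
    have hxw : x w = 1 := hw.2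
    have hgu : qGrad G γ x u ≤ 0 := down u (by rw [hxu]; norm_num)
    have ha := G.adjMatrix_mulVec_apply u x
    have hb := Gᶜ.adjMatrix_mulVec_apply u x
    have hage : (1:ℝ) ≤ ((G.adjMatrix ℝ) *ᵥ x) u := by
      rw [ha]
      have hmem : w ∈ G.neighborFinset u := by rwa [SimpleGraph.mem_neighborFinset]
      calc (1:ℝ) = x w := hxw.symm
        _ ≤ _ := Finset.single_le_sum (fun w' _ => hx0 w') hmem
    have hble : ((Gᶜ.adjMatrix ℝ) *ᵥ x) u ≤ (n:ℝ) - 1 := by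
      rw [hb]; exact sum_nbr_le Gᶜ x hx1 u _
    have : 1 ≤ qGrad G γ x u := by
      simp only [qGrad]
      have hhint := mul_le_mul_of_nonneg_left hage hγpos.le
      linarith
    linarith
  · intro v hv
    by_contra hc
    push_neg at hc
    have hxv : x v = 0 := by
      rcases hbin v with h0 | h1
      · exact h0
      · exact absurd (Finset.mem_filter.mpr ⟨Finset.mem_univ v, h1⟩) hv
    have hgv : 0 ≤ qGrad G γ x v := up v (by rw [hxv]; norm_num)
    have ha := G.adjMatrix_mulVec_apply v x
    have hb := Gᶜ.adjMatrix_mulVec_apply v x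
    have ha0 : ((G.adjMatrix ℝ) *ᵥ x) v = 0 := by
      rw [ha]
      apply Finset.sum_eq_zero
      intro u hu
      rw [SimpleGraph.mem_neighborFinset] at hu
      have huS : u ∉ Finset.univ.filter (fun w => x w = 1) := fun huS => hc u huS hu
      rcases hbin u with h0 | h1
      · exact h0
      · exact absurd (Finset.mem_filter.mpr ⟨Finset.mem_univ u, h1⟩) huS
    have hbnn : 0 ≤ ((Gᶜ.adjMatrix ℝ) *ᵥ x) v := by
      rw [hb]; exact Finset.sum_nonneg fun u _ => hx0 u
    simp only [qGrad, ha0, mul_zero] at hgv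
    linarith
  · funext v
    by_cases hv : v ∈ Finset.univ.filter (fun w => x w = 1)
    · rw [if_pos hv]
      exact (Finset.mem_filter.mp hv).2
    · rw [if_neg hv]
      rcases hbin v with h0 | h1
      · exact h0
      · exact absurd (Finset.mem_filter.mpr ⟨Finset.mem_univ v, h1⟩) hv

/-- for γ ≥ n+1 (and G with at least one edge), the local minimizers of f
over [0,1]^n are exactly the indicator vectors of maximal independent sets of G. -/
theorem stmt14 {n : ℕ} (G : SimpleGraph (Fin n)) (hE : G.edgeSet.Nonempty)
    (γ : ℝ) (hγ : (n : ℝ) + 1 ≤ γ) :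
    {x : Fin n → ℝ | x ∈ Set.Icc (0 : Fin n → ℝ) 1 ∧
        IsLocalMinOn (quantNetObj G γ) (Set.Icc (0 : Fin n → ℝ) 1) x}
      = {x : Fin n → ℝ | ∃ S : Finset (Fin n),
          (∀ u ∈ S, ∀ v ∈ S, ¬ G.Adj u v) ∧
          (∀ v, v ∉ S → ∃ w ∈ S, G.Adj v w) ∧
          x = fun v => if v ∈ S then (1 : ℝ) else 0} := by
  have hn : 0 < n := by
    obtain ⟨e, he⟩ := hE
    exact e.out.1.pos
  ext x
  simp only [Set.mem_setOf_eq]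
  constructor
  · rintro ⟨hbox, hloc⟩
    exact stmt14_forward G hn γ hγ x hbox hloc
  · rintro ⟨S, hind, hmax, rfl⟩
    exact stmt14_backward G hn γ hγ S hind hmax
end
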